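/- The change of variables y(τ) = x(e^τ)/|x(e^τ)|, w(τ) = e^τ |x(e^τ)|^{α−1} transforms any nonvanishing solution x(t) (t > 0) of dx/dt = |x|^α(F_s(x/|x|) + F_r(x/|x|) x/|x|) into a solution of the autonomous system dy/dτ = w F_s(y), dw/dτ = w + (α−1) F_r(y) w². -/

import Mathlib

open Real RealInnerProductSpace

lemma aux_norm_deriv {E : Type*} [NormedAddCommGroup E] [InnerProductSpace ℝ E]
    {f : ℝ → E} {f' : E} {t : ℝ} (hf : HasDerivAt f f' t) (h0 : f t ≠ 0) :
    HasDerivAt (fun s => ‖f s‖) ((inner ℝ (f t) f' : ℝ) / ‖f t‖) t := by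
  have h1 : HasDerivAt (fun s => ‖f s‖ ^ 2) (2 * (inner ℝ (f t) f' : ℝ)) t := hf.norm_sq
  have h2 := h1.sqrt (pow_ne_zero 2 (norm_ne_zero_iff.2 h0))
  have hn : (0:ℝ) < ‖f t‖ := norm_pos_iff.2 h0
  have hs : ∀ s : ℝ, Real.sqrt (‖f s‖ ^ 2) = ‖f s‖ := fun s => Real.sqrt_sq (norm_nonneg _)
  convert h2 using 1
  · funext s; exact (hs s).symm
  · rw [hs t]; field_simp

theorem stmt_13 {d : ℕ} (α : ℝ) (hα : α < 1)
    (Fs : EuclideanSpace ℝ (Fin d) → EuclideanSpace ℝ (Fin d))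
    (Fr : EuclideanSpace ℝ (Fin d) → ℝ)
    (htan : ∀ z : EuclideanSpace ℝ (Fin d), ‖z‖ = 1 → inner ℝ (Fs z) z = (0:ℝ))
    (x : ℝ → EuclideanSpace ℝ (Fin d))
    (hne : ∀ t : ℝ, 0 < t → x t ≠ 0)
    (hx : ∀ t : ℝ, 0 < t →
      HasDerivAt x
        ((‖x t‖ ^ α) •
          (Fs (‖x t‖⁻¹ • x t) + Fr (‖x t‖⁻¹ • x t) • (‖x t‖⁻¹ • x t))) t) :
    ∀ τ : ℝ,
      HasDerivAt (fun τ : ℝ => ‖x (Real.exp τ)‖⁻¹ • x (Real.exp τ))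
        ((Real.exp τ * ‖x (Real.exp τ)‖ ^ (α - 1)) •
          Fs (‖x (Real.exp τ)‖⁻¹ • x (Real.exp τ))) τ ∧
      HasDerivAt (fun τ : ℝ => Real.exp τ * ‖x (Real.exp τ)‖ ^ (α - 1))
        (Real.exp τ * ‖x (Real.exp τ)‖ ^ (α - 1)
          + (α - 1) * Fr (‖x (Real.exp τ)‖⁻¹ • x (Real.exp τ))
            * (Real.exp τ * ‖x (Real.exp τ)‖ ^ (α - 1)) ^ 2) τ := by
  intro τ
  set t : ℝ := Real.exp τ with ht_def
  have ht : 0 < t := Real.exp_pos τ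
  set X : EuclideanSpace ℝ (Fin d) := x t with hX_def
  have hX0 : X ≠ 0 := hne t ht
  set n : ℝ := ‖X‖ with hn_def
  have hn : 0 < n := norm_pos_iff.2 hX0
  set u : EuclideanSpace ℝ (Fin d) := n⁻¹ • X with hu_def
  have hu1 : ‖u‖ = 1 := by
    rw [hu_def, norm_smul, norm_inv, Real.norm_eq_abs, abs_of_pos hn]
    field_simp; rfl
  set v : EuclideanSpace ℝ (Fin d) := (n ^ α) • (Fs u + Fr u • u) with hv_def
  have hX : HasDerivAt x v t := hx t ht
  -- derivative of τ ↦ x (exp τ)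
  have hE : HasDerivAt (fun s : ℝ => x (Real.exp s)) (t • v) τ := by
    have := hX.scomp τ (Real.hasDerivAt_exp τ)
    exact this
  -- inner product computation
  have hinner : (inner ℝ X (t • v) : ℝ) = t * n ^ α * Fr u * n := by
    have h1 : (inner ℝ X (Fs u) : ℝ) = 0 := by
      have h2 : (inner ℝ (Fs u) u : ℝ) = 0 := htan u hu1
      have h3 : X = n • u := by
        rw [hu_def, smul_smul, mul_inv_cancel₀ hn.ne', one_smul]
      rw [h3, real_inner_smul_left, real_inner_comm, h2, mul_zero]
    have h4 : (inner ℝ X u : ℝ) = n := by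
      rw [hu_def, real_inner_smul_right, real_inner_self_eq_norm_sq, ← hn_def]
      field_simp
    rw [real_inner_smul_right, hv_def, real_inner_smul_right, inner_add_right,
      real_inner_smul_right, h1, h4]
    ring
  -- derivative of τ ↦ ‖x (exp τ)‖
  have hN : HasDerivAt (fun s : ℝ => ‖x (Real.exp s)‖) (t * n ^ α * Fr u) τ := by
    have := aux_norm_deriv hE (by simpa using hX0)
    rw [show (inner ℝ (x (Real.exp τ)) (t • v) : ℝ) = t * n ^ α * Fr u * n from hinner] at this
    convert this using 1
    change _ = t * n ^ α * Fr u * n / n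
    field_simp
  constructor
  · -- spherical equation
    have hinv : HasDerivAt (fun s : ℝ => ‖x (Real.exp s)‖⁻¹)
        (-(t * n ^ α * Fr u) / n ^ 2) τ := hN.inv hn.ne'
    have : HasDerivAt (fun s : ℝ => ‖x (Real.exp s)‖⁻¹ • x (Real.exp s))
        (‖x (Real.exp τ)‖⁻¹ • (t • v) + (-(t * n ^ α * Fr u) / n ^ 2) • x (Real.exp τ)) τ :=
      hinv.smul hE
    convert this using 1
    have hXu : x (Real.exp τ) = n • u := by
      rw [hu_def, smul_smul, mul_inv_cancel₀ hn.ne', one_smul]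
    have hpow : n ^ (α - 1) = n ^ α * n⁻¹ := by
      rw [Real.rpow_sub hn, Real.rpow_one, div_eq_mul_inv]
    have hnn : ‖x (Real.exp τ)‖ = n := rfl
    show (t * n ^ (α - 1)) • Fs u = _
    rw [show ‖x (Real.exp τ)‖ = n from rfl, hXu, hv_def, hpow]
    match_scalars
    · field_simp
    · field_simp; ring
  · -- radial equation
    have hR : HasDerivAt (fun s : ℝ => ‖x (Real.exp s)‖ ^ (α - 1))
        ((t * n ^ α * Fr u) * (α - 1) * n ^ (α - 1 - 1)) τ :=
      hN.rpow_const (Or.inl hn.ne')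
    have : HasDerivAt (fun s : ℝ => Real.exp s * ‖x (Real.exp s)‖ ^ (α - 1))
        (Real.exp τ * ‖x (Real.exp τ)‖ ^ (α - 1) + Real.exp τ * ((t * n ^ α * Fr u) * (α - 1) * n ^ (α - 1 - 1))) τ :=
      (Real.hasDerivAt_exp τ).mul hR
    convert this using 1
    show t * n ^ (α - 1) + (α - 1) * Fr u * (t * n ^ (α - 1)) ^ 2 = _
    have h5 : n ^ (α - 1) * n ^ (α - 1) = n ^ α * n ^ (α - 1 - 1) := by
      rw [← Real.rpow_add hn, ← Real.rpow_add hn]; ring_nf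
    rw [sq, show t * n ^ (α-1) * (t * n ^ (α-1)) = t * t * (n ^ (α-1) * n ^ (α-1)) by ring, h5]
    ring
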